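/- (Cauchy's formula) Let p : ℝ → ℝ be a C², 2π-periodic function, and define γ̄(θ) = (p(θ)cos θ − p'(θ)sin θ, p(θ)sin θ + p'(θ)cos θ). If p(θ) + p''(θ) > 0 for all θ, then the length of γ̄ over one period equals the integral of the support function: ∫₀^{2π} ‖γ̄'(θ)‖ dθ = ∫₀^{2π} (p(θ) + p''(θ)) dθ = ∫₀^{2π} p(θ) dθ. -/

import Mathlib

open Real

lemma cauchy_formula_aux
    (p : ℝ → ℝ) (hp : ContDiff ℝ 2 p)
    (γ : ℝ → EuclideanSpace ℝ (Fin 2))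
    (hγ : ∀ θ : ℝ, γ θ = ![p θ * Real.cos θ - deriv p θ * Real.sin θ,
                           p θ * Real.sin θ + deriv p θ * Real.cos θ])
    (θ : ℝ) :
    HasDerivAt γ ((PiLp.continuousLinearEquiv 2 ℝ (fun _ : Fin 2 => ℝ)).symm
      ![-(p θ + deriv (deriv p) θ) * Real.sin θ, (p θ + deriv (deriv p) θ) * Real.cos θ]) θ := by
  have hdp : Differentiable ℝ p := hp.differentiable (by norm_num)
  have hdp' : Differentiable ℝ (deriv p) := by
    have h1 : ContDiff ℝ 1 (deriv p) := ((contDiff_succ_iff_deriv (n := 1)).mp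
      (by exact_mod_cast hp)).2.2
    exact h1.differentiable one_ne_zero
  have h1 : HasDerivAt (fun t => p t * Real.cos t - deriv p t * Real.sin t)
      (-(p θ + deriv (deriv p) θ) * Real.sin θ) θ := by
    have := (((hdp θ).hasDerivAt.mul (Real.hasDerivAt_cos θ)).sub
      ((hdp' θ).hasDerivAt.mul (Real.hasDerivAt_sin θ)))
    exact this.congr_deriv (by ring)
  have h2 : HasDerivAt (fun t => p t * Real.sin t + deriv p t * Real.cos t)
      ((p θ + deriv (deriv p) θ) * Real.cos θ) θ := by
    have := (((hdp θ).hasDerivAt.mul (Real.hasDerivAt_sin θ)).add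
      ((hdp' θ).hasDerivAt.mul (Real.hasDerivAt_cos θ)))
    exact this.congr_deriv (by ring)
  have hf : HasDerivAt (fun t => ![p t * Real.cos t - deriv p t * Real.sin t,
      p t * Real.sin t + deriv p t * Real.cos t])
      ![-(p θ + deriv (deriv p) θ) * Real.sin θ, (p θ + deriv (deriv p) θ) * Real.cos θ] θ := by
    rw [hasDerivAt_pi]
    intro i
    fin_cases i
    · simp only [Fin.zero_eta, Matrix.cons_val_zero]
      exact h1
    · simp only [Fin.mk_one, Matrix.cons_val_one, Matrix.head_cons]
      exact h2
  have := ((PiLp.continuousLinearEquiv 2 ℝ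
    (fun _ : Fin 2 => ℝ)).symm.hasFDerivAt.comp_hasDerivAt θ hf)
  refine this.congr_of_eventuallyEq ?_
  filter_upwards with t
  exact WithLp.ofLp_injective 2 (hγ t)

/-- Cauchy's formula: for a strictly convex closed curve given in polar tangential
coordinates by a `C²`, `2π`-periodic support function `p` with `p + p'' > 0`, the
length over one period equals `∫₀^{2π} p`. -/
theorem cauchy_formula
    (p : ℝ → ℝ)
    (hp : ContDiff ℝ 2 p)
    (hper : ∀ θ : ℝ, p (θ + 2 * π) = p θ)
    (γ : ℝ → EuclideanSpace ℝ (Fin 2))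
    (hγ : ∀ θ : ℝ, γ θ = ![p θ * Real.cos θ - deriv p θ * Real.sin θ,
                           p θ * Real.sin θ + deriv p θ * Real.cos θ])
    (hpos : ∀ θ : ℝ, 0 < p θ + deriv (deriv p) θ) :
    (∫ θ in (0:ℝ)..(2 * π), ‖deriv γ θ‖) =
        (∫ θ in (0:ℝ)..(2 * π), (p θ + deriv (deriv p) θ)) ∧
      (∫ θ in (0:ℝ)..(2 * π), (p θ + deriv (deriv p) θ)) =
        ∫ θ in (0:ℝ)..(2 * π), p θ := by
  have hc1 : ContDiff ℝ 1 (deriv p) := ((contDiff_succ_iff_deriv (n := 1)).mp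
    (by exact_mod_cast hp)).2.2
  have hnorm : ∀ θ : ℝ, ‖deriv γ θ‖ = p θ + deriv (deriv p) θ := by
    intro θ
    rw [(cauchy_formula_aux p hp γ hγ θ).deriv]
    set c := p θ + deriv (deriv p) θ with hc
    have : ‖((PiLp.continuousLinearEquiv 2 ℝ (fun _ : Fin 2 => ℝ)).symm
        ![-c * Real.sin θ, c * Real.cos θ] : EuclideanSpace ℝ (Fin 2))‖
        = Real.sqrt (c ^ 2) := by
      rw [EuclideanSpace.norm_eq]
      have happ : ∀ (v : Fin 2 → ℝ) (i : Fin 2),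
          ((PiLp.continuousLinearEquiv 2 ℝ (fun _ : Fin 2 => ℝ)).symm v) i = v i :=
        fun _ _ => rfl
      simp only [happ, Fin.sum_univ_two, Matrix.cons_val_zero, Matrix.cons_val_one,
        Matrix.head_cons, Real.norm_eq_abs, sq_abs]
      congr 1
      nlinarith [Real.sin_sq_add_cos_sq θ]
    rw [this, Real.sqrt_sq (le_of_lt (hpos θ))]
  constructor
  · exact intervalIntegral.integral_congr fun θ _ => hnorm θ
  · have hcont_p : Continuous p := hp.continuous
    have hcont_pp : Continuous (deriv (deriv p)) := (contDiff_one_iff_deriv.mp hc1).2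
    have hint : (∫ θ in (0:ℝ)..(2 * π), (p θ + deriv (deriv p) θ))
        = (∫ θ in (0:ℝ)..(2 * π), p θ) + ∫ θ in (0:ℝ)..(2 * π), deriv (deriv p) θ := by
      exact intervalIntegral.integral_add (hcont_p.intervalIntegrable _ _)
        (hcont_pp.intervalIntegrable _ _)
    have hftc : (∫ θ in (0:ℝ)..(2 * π), deriv (deriv p) θ) = deriv p (2 * π) - deriv p 0 := by
      exact intervalIntegral.integral_deriv_eq_sub
        (fun x _ => (hc1.differentiable one_ne_zero) x)
        (hcont_pp.intervalIntegrable _ _)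
    have hper' : deriv p (2 * π) = deriv p 0 := by
      have : deriv p (0 + 2 * π) = deriv p 0 := by
        rw [← deriv_comp_add_const p (2 * π)]
        congr 1; ext x; exact hper x
      simpa using this
    rw [hint, hftc, hper']
    ring
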